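/- Let d ∈ {1, 2, 3}, fix λ > 0, and let S : ℝ → ℝ be continuous on [−4dλ, 0] with S(0) = 1, |S(z)| < 1 for all z ∈ [−4dλ, 0), and S differentiable at 0 with S′(0) = 1. Then there exists a constant C̄ > 0 (depending only on S, d and λ) such that for every integer K ≥ 2, with Δt = λ/K² and s_k = −4ΔtK² Σ_{j=1}^d sin²(π k_j/(2K)), one has Σ_{k ∈ {1,…,K−1}^d} 1/(1 − |S(s_k)|)² ≤ C̄²·Δt^{−2}. -/

import Mathlib

open Real

/-- The eigenvalue arguments `s_k = −Δt·λ_k^h` of the stability function, with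
`Δt = λ/K²` and multi-index `k` with components `(k j) + 1 ∈ {1,…,K−1}`. -/
noncomputable def sVal (K d : ℕ) (lam : ℝ) (k : Fin d → Fin (K - 1)) : ℝ :=
  -(4 * (lam / (K : ℝ) ^ 2) * (K : ℝ) ^ 2
    * ∑ j, Real.sin (π * (((k j : ℕ) : ℝ) + 1) / (2 * K)) ^ 2)

lemma series_bound_squared_aux (M : ℝ) (hM : 0 < M) (S : ℝ → ℝ)
    (hcont : ContinuousOn S (Set.Icc (-M) 0)) (hS0 : S 0 = 1)
    (hSlt : ∀ z ∈ Set.Ico (-M) 0, |S z| < 1)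
    (hderiv : HasDerivAt S 1 0) :
    ∃ c > 0, ∀ z ∈ Set.Icc (-M) 0, c * |z| ≤ 1 - |S z| := by
  have h := (hasDerivAt_iff_isLittleO.mp hderiv).def (by norm_num : (0:ℝ) < 1/2)
  rw [Metric.eventually_nhds_iff] at h
  obtain ⟨δ, hδ, hsmall⟩ := h
  set δ' : ℝ := min (δ/2) 1 with hδ'def
  have hδ'pos : 0 < δ' := lt_min (by linarith) one_pos
  have hδ'1 : δ' ≤ 1 := min_le_right _ _
  have key : ∀ z : ℝ, -δ' ≤ z → z ≤ 0 → |z| / 2 ≤ 1 - |S z| := by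
    intro z h1 h2
    have hzd : dist z 0 < δ := by
      rw [Real.dist_eq, sub_zero, abs_of_nonpos h2]
      have : δ' ≤ δ/2 := min_le_left _ _
      linarith
    have := hsmall hzd
    simp only [hS0, sub_zero, smul_eq_mul, mul_one, Real.norm_eq_abs] at this
    have habs : |z| = -z := abs_of_nonpos h2
    have h3 := abs_le.mp this
    have hz1 : |z| ≤ 1 := by rw [habs]; linarith
    have hSub : S z ≤ 1 - |z| / 2 := by
      have := h3.2; rw [habs] at this ⊢; linarith
    have hSlb : -(1 - |z| / 2) ≤ S z := by
      have := h3.1; rw [habs] at this ⊢; linarith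
    have : |S z| ≤ 1 - |z| / 2 := abs_le.mpr ⟨hSlb, hSub⟩
    linarith
  by_cases hcase : δ' ≤ M
  · -- compact part
    have hsub : Set.Icc (-M) (-δ') ⊆ Set.Icc (-M) 0 :=
      Set.Icc_subset_Icc le_rfl (by linarith)
    have hne : (Set.Icc (-M) (-δ')).Nonempty := ⟨-M, le_rfl, by linarith⟩
    have hfc : ContinuousOn (fun z => 1 - |S z|) (Set.Icc (-M) (-δ')) :=
      continuousOn_const.sub (hcont.mono hsub).abs
    obtain ⟨z₀, hz₀mem, hz₀min⟩ := (isCompact_Icc).exists_isMinOn hne hfc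
    set ε : ℝ := 1 - |S z₀| with hεdef
    have hεpos : 0 < ε := by
      have : |S z₀| < 1 := hSlt z₀ ⟨hz₀mem.1, by have := hz₀mem.2; linarith⟩
      linarith
    refine ⟨min (1/2) (ε / M), lt_min (by norm_num) (by positivity), ?_⟩
    rintro z ⟨hz1, hz2⟩
    by_cases hz3 : -δ' ≤ z
    · have := key z hz3 hz2
      have hc2 : min (1/2) (ε / M) * |z| ≤ 1/2 * |z| :=
        mul_le_mul_of_nonneg_right (min_le_left _ _) (abs_nonneg _)
      linarith
    · have hzA : z ∈ Set.Icc (-M) (-δ') := ⟨hz1, by linarith⟩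
      have h4 : ε ≤ 1 - |S z| := hz₀min hzA
      have h5 : |z| ≤ M := by rw [abs_of_nonpos hz2]; linarith
      have h6 : min (1/2) (ε / M) * |z| ≤ (ε / M) * M :=
        mul_le_mul (min_le_right _ _) h5 (abs_nonneg _) (by positivity)
      rw [div_mul_cancel₀ _ (ne_of_gt hM)] at h6
      linarith
  · refine ⟨1/2, by norm_num, ?_⟩
    rintro z ⟨hz1, hz2⟩
    have := key z (by linarith [not_le.mp hcase]) hz2
    linarith

set_option maxHeartbeats 2000000

/-- For `d ∈ {1,2,3}`:
`Σ_{k∈{1,…,K−1}^d} 1/(1 − |S(s_k)|)² ≤ C̄² Δt⁻²` with `Δt = λ/K²`. -/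
theorem series_bound_squared (d : ℕ) (hd : d = 1 ∨ d = 2 ∨ d = 3)
    (lam : ℝ) (hlam : 0 < lam) (S : ℝ → ℝ)
    (hcont : ContinuousOn S (Set.Icc (-(4 * (d : ℝ) * lam)) 0))
    (hS0 : S 0 = 1)
    (hSlt : ∀ z ∈ Set.Ico (-(4 * (d : ℝ) * lam)) 0, |S z| < 1)
    (hderiv : HasDerivAt S 1 0) :
    ∃ C > 0, ∀ K : ℕ, 2 ≤ K →
      ∑ k : Fin d → Fin (K - 1), 1 / (1 - |S (sVal K d lam k)|) ^ 2
        ≤ C ^ 2 * ((lam / (K : ℝ) ^ 2)⁻¹) ^ 2 := by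
  have hd1 : 1 ≤ d := by rcases hd with h|h|h <;> omega
  have hd0 : (0:ℝ) < (d:ℝ) := by exact_mod_cast Nat.pos_of_ne_zero (by omega)
  have hM : (0:ℝ) < 4 * (d:ℝ) * lam := by positivity
  obtain ⟨c, hc, hcb⟩ := series_bound_squared_aux _ hM S hcont hS0 hSlt hderiv
  set p : ℝ := 4 / (d:ℝ) with hpdef
  have hp1 : 1 < p := by
    rcases hd with h|h|h <;> (subst h; norm_num [hpdef])
  have hpd : p * (d:ℝ) = 4 := div_mul_cancel₀ 4 (ne_of_gt hd0)
  have hsum : Summable (fun n : ℕ => 1 / ((n:ℝ) + 1) ^ p) := by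
    have h1 : Summable (fun n : ℕ => 1 / ((n:ℝ)) ^ p) :=
      Real.summable_one_div_nat_rpow.mpr hp1
    have h2 := h1.comp_injective Nat.succ_injective
    refine h2.congr fun n => ?_
    have h3 : ((n+1:ℕ):ℝ) = (n:ℝ)+1 := by push_cast; ring
    simp [Function.comp, Nat.succ_eq_add_one, h3]
  set B : ℝ := ∑' n : ℕ, 1 / ((n:ℝ) + 1) ^ p with hBdef
  have hB0 : 0 ≤ B := tsum_nonneg fun n => by positivity
  set C : ℝ := Real.sqrt (B ^ d / (16 * c ^ 2 * (d:ℝ) ^ 2)) + 1 with hCdef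
  have hC0 : 0 < C := by positivity
  have hC2 : B ^ d / (16 * c ^ 2 * (d:ℝ) ^ 2) ≤ C ^ 2 := by
    have hx : (0:ℝ) ≤ B ^ d / (16 * c ^ 2 * (d:ℝ) ^ 2) := by positivity
    have h1 := Real.sq_sqrt hx
    have h2 := Real.sqrt_nonneg (B ^ d / (16 * c ^ 2 * (d:ℝ) ^ 2))
    nlinarith
  refine ⟨C, hC0, ?_⟩
  intro K hK
  have hK0 : (0:ℝ) < (K:ℝ) := by exact_mod_cast (by omega : 0 < K)
  have hRHS : ((lam / (K : ℝ) ^ 2)⁻¹) ^ 2 = (K:ℝ) ^ 4 / lam ^ 2 := by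
    rw [inv_div, div_pow]; ring_nf
  -- per-k bound
  have hterm : ∀ k : Fin d → Fin (K - 1),
      1 / (1 - |S (sVal K d lam k)|) ^ 2
        ≤ (K:ℝ) ^ 4 / (16 * c ^ 2 * lam ^ 2 * (d:ℝ) ^ 2)
            * ∏ j, (1 / (((k j : ℕ):ℝ) + 1) ^ p) := by
    intro k
    have ha1 : ∀ j, (1:ℝ) ≤ ((k j : ℕ):ℝ) + 1 := fun j => by
      have : (0:ℝ) ≤ ((k j : ℕ):ℝ) := Nat.cast_nonneg _
      linarith
    have haK : ∀ j, ((k j : ℕ):ℝ) + 1 ≤ (K:ℝ) := fun j => by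
      have h1 : (k j : ℕ) + 1 ≤ K := by have := (k j).2; omega
      have h2 := (Nat.cast_le (α := ℝ)).mpr h1
      push_cast at h2
      linarith
    have hapos : ∀ j, (0:ℝ) < ((k j : ℕ):ℝ) + 1 := fun j =>
      lt_of_lt_of_le one_pos (ha1 j)
    -- sine lower bound
    have hsin : ∀ j, ((((k j : ℕ):ℝ) + 1) / K) ^ 2
        ≤ Real.sin (π * (((k j : ℕ):ℝ) + 1) / (2 * K)) ^ 2 := by
      intro j
      have hp0 := hapos j
      have harg0 : 0 ≤ π * (((k j : ℕ):ℝ) + 1) / (2 * K) := by positivity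
      have hargπ : π * (((k j : ℕ):ℝ) + 1) / (2 * K) ≤ π / 2 := by
        rw [div_le_div_iff₀ (by positivity) (by norm_num)]
        have := haK j
        nlinarith [Real.pi_pos]
      have hms := Real.mul_le_sin harg0 hargπ
      have heq : 2 / π * (π * (((k j : ℕ):ℝ) + 1) / (2 * K))
          = (((k j : ℕ):ℝ) + 1) / K := by
        have hπ := Real.pi_ne_zero
        field_simp
      rw [heq] at hms
      exact pow_le_pow_left₀ (by positivity) hms 2
    set t : ℝ := ∑ j, Real.sin (π * (((k j : ℕ):ℝ) + 1) / (2 * K)) ^ 2 with htdef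
    set T : ℝ := ∑ j, ((((k j : ℕ):ℝ) + 1) / K) ^ 2 with hTdef
    have hTt : T ≤ t := Finset.sum_le_sum fun j _ => hsin j
    have hne : Nonempty (Fin d) := Fin.pos_iff_nonempty.mp (by omega)
    have hT0 : 0 < T := by
      refine Finset.sum_pos (fun j _ => ?_) Finset.univ_nonempty
      have := hapos j; positivity
    have ht0 : 0 < t := lt_of_lt_of_le hT0 hTt
    have htd : t ≤ (d:ℝ) := by
      have h1 : t ≤ Finset.univ.card • (1:ℝ) :=
        Finset.sum_le_card_nsmul _ _ 1 fun j _ => Real.sin_sq_le_one _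
      simpa using h1
    have hs_eq : sVal K d lam k = -(4 * lam * t) := by
      simp only [sVal, htdef]
      have h1 : lam / (K:ℝ)^2 * (K:ℝ)^2 = lam := div_mul_cancel₀ _ (by positivity)
      rw [mul_assoc 4, h1]
    have hs_neg : sVal K d lam k < 0 := by
      rw [hs_eq]
      have := mul_pos (mul_pos (by norm_num : (0:ℝ)<4) hlam) ht0
      linarith
    have hs_ge : -(4 * (d:ℝ) * lam) ≤ sVal K d lam k := by
      rw [hs_eq]
      have h41 : 4 * lam * t ≤ 4 * lam * (d:ℝ) :=
        mul_le_mul_of_nonneg_left htd (by positivity)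
      linarith
    have habs : |sVal K d lam k| = 4 * lam * t := by
      have h40 : 0 < 4 * lam * t := mul_pos (mul_pos (by norm_num : (0:ℝ)<4) hlam) ht0
      rw [hs_eq, abs_neg, abs_of_pos h40]
    have hlow : c * (4 * lam * t) ≤ 1 - |S (sVal K d lam k)| := by
      have := hcb _ ⟨hs_ge, le_of_lt hs_neg⟩
      rwa [habs] at this
    -- AM-GM
    set P : ℝ := ∏ j, ((((k j : ℕ):ℝ) + 1) / K) ^ (2/(d:ℝ)) with hPdef
    set G : ℝ := ∏ j, ((((k j : ℕ):ℝ) + 1) / K) ^ p with hGdef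
    have hP0 : 0 < P := by
      rw [hPdef]
      exact Finset.prod_pos fun j _ =>
        Real.rpow_pos_of_pos (by have := hapos j; positivity) _
    have hG0 : 0 < G := by
      rw [hGdef]
      exact Finset.prod_pos fun j _ =>
        Real.rpow_pos_of_pos (by have := hapos j; positivity) _
    have hPT : P ≤ T / (d:ℝ) := by
      have h := Real.geom_mean_le_arith_mean_weighted Finset.univ
        (fun _ : Fin d => 1 / (d:ℝ)) (fun j => ((((k j : ℕ):ℝ) + 1) / K) ^ 2)
        (fun i _ => by positivity)
        (by
          rw [Finset.sum_const, Finset.card_univ, Fintype.card_fin, nsmul_eq_mul]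
          field_simp)
        (fun i _ => by have := hapos i; positivity)
      have hL : ∀ j : Fin d, (((((k j : ℕ):ℝ) + 1) / K) ^ 2) ^ ((1:ℝ)/(d:ℝ))
          = ((((k j : ℕ):ℝ) + 1) / K) ^ (2/(d:ℝ)) := by
        intro j
        have h0 : (0:ℝ) ≤ (((k j : ℕ):ℝ) + 1) / K := by have := hapos j; positivity
        rw [← Real.rpow_natCast ((((k j : ℕ):ℝ) + 1) / K) 2, ← Real.rpow_mul h0]
        norm_num [div_eq_mul_inv]
      calc P = ∏ j, (((((k j : ℕ):ℝ) + 1) / K) ^ 2) ^ ((1:ℝ)/(d:ℝ)) := by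
              rw [hPdef]; exact (Finset.prod_congr rfl fun j _ => (hL j)).symm
        _ ≤ ∑ j : Fin d, 1/(d:ℝ) * ((((k j : ℕ):ℝ) + 1) / K) ^ 2 := h
        _ = T / (d:ℝ) := by
              rw [hTdef, Finset.sum_div]
              exact Finset.sum_congr rfl fun j _ => by ring
    have hGP : G = P ^ 2 := by
      rw [hGdef, hPdef, ← Finset.prod_pow]
      refine Finset.prod_congr rfl fun j _ => ?_
      have h0 : (0:ℝ) < (((k j : ℕ):ℝ) + 1) / K := by have := hapos j; positivity
      rw [sq, ← Real.rpow_add h0]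
      congr 1
      rw [hpdef]; ring
    have hT2 : (d:ℝ)^2 * G ≤ T^2 := by
      rw [hGP]
      have h1 : (d:ℝ) * P ≤ T := by
        have := mul_le_mul_of_nonneg_left hPT (le_of_lt hd0)
        rwa [mul_div_cancel₀ _ (ne_of_gt hd0)] at this
      have h2 : ((d:ℝ) * P)^2 ≤ T^2 :=
        pow_le_pow_left₀ (by positivity) h1 2
      calc (d:ℝ)^2 * P^2 = ((d:ℝ)*P)^2 := by ring
        _ ≤ T^2 := h2
    -- G in terms of the product over a_j
    have hG2 : G = (∏ j, ((((k j : ℕ):ℝ) + 1)) ^ p) / (K:ℝ) ^ 4 := by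
      have hstep : ∀ j : Fin d, ((((k j : ℕ):ℝ) + 1) / K) ^ p
          = ((((k j : ℕ):ℝ) + 1)) ^ p / (K:ℝ) ^ p := fun j =>
        Real.div_rpow (le_of_lt (hapos j)) (le_of_lt hK0) p
      rw [hGdef]
      rw [Finset.prod_congr rfl fun j _ => hstep j]
      rw [Finset.prod_div_distrib, Finset.prod_const, Finset.card_univ, Fintype.card_fin]
      congr 1
      rw [← Real.rpow_natCast ((K:ℝ)^p) d, ← Real.rpow_mul (le_of_lt hK0), hpd,
        show (4:ℝ) = ((4:ℕ):ℝ) by norm_num, Real.rpow_natCast]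
    have hprodpos : 0 < ∏ j, ((((k j : ℕ):ℝ) + 1)) ^ p :=
      Finset.prod_pos fun j _ => Real.rpow_pos_of_pos (hapos j) _
    -- key quadratic bound
    have hkey : 16 * c^2 * lam^2 * (d:ℝ)^2 * G ≤ (1 - |S (sVal K d lam k)|) ^ 2 := by
      have e1 : (c * (4 * lam * t))^2 ≤ (1 - |S (sVal K d lam k)|)^2 :=
        pow_le_pow_left₀ (by positivity) hlow 2
      have e2 : T^2 ≤ t^2 := pow_le_pow_left₀ hT0.le hTt 2
      calc 16 * c^2 * lam^2 * (d:ℝ)^2 * G = (c*(4*lam))^2 * ((d:ℝ)^2 * G) := by ring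
        _ ≤ (c*(4*lam))^2 * t^2 := by
            have h3 : (d:ℝ)^2 * G ≤ t^2 := hT2.trans e2
            exact mul_le_mul_of_nonneg_left h3 (by positivity)
        _ = (c*(4*lam*t))^2 := by ring
        _ ≤ (1 - |S (sVal K d lam k)|)^2 := e1
    have hfin : 1 / (1 - |S (sVal K d lam k)|) ^ 2
        ≤ 1 / (16 * c^2 * lam^2 * (d:ℝ)^2 * G) :=
      one_div_le_one_div_of_le (by positivity) hkey
    have heq2 : 1 / (16 * c^2 * lam^2 * (d:ℝ)^2 * G)
        = (K:ℝ) ^ 4 / (16 * c ^ 2 * lam ^ 2 * (d:ℝ) ^ 2)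
            * ∏ j, (1 / (((k j : ℕ):ℝ) + 1) ^ p) := by
      rw [hG2]
      simp only [one_div]
      rw [Finset.prod_inv_distrib]
      field_simp
    rw [heq2] at hfin
    exact hfin
  -- sum up
  calc ∑ k : Fin d → Fin (K - 1), 1 / (1 - |S (sVal K d lam k)|) ^ 2
      ≤ ∑ k : Fin d → Fin (K - 1),
          (K:ℝ) ^ 4 / (16 * c ^ 2 * lam ^ 2 * (d:ℝ) ^ 2)
            * ∏ j, (1 / (((k j : ℕ):ℝ) + 1) ^ p) :=
        Finset.sum_le_sum fun k _ => hterm k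
    _ = (K:ℝ) ^ 4 / (16 * c ^ 2 * lam ^ 2 * (d:ℝ) ^ 2)
          * (∑ i : Fin (K-1), 1 / (((i : ℕ):ℝ) + 1) ^ p) ^ d := by
        rw [← Finset.mul_sum, Fintype.sum_pow]
    _ ≤ (K:ℝ) ^ 4 / (16 * c ^ 2 * lam ^ 2 * (d:ℝ) ^ 2) * B ^ d := by
        have hgB : (∑ i : Fin (K-1), 1 / (((i : ℕ):ℝ) + 1) ^ p) ≤ B := by
          rw [Fin.sum_univ_eq_sum_range (fun n => 1 / ((n:ℝ) + 1) ^ p) (K-1)]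
          exact Summable.sum_le_tsum (Finset.range (K-1)) (fun i _ => by positivity) hsum
        have hgnn : 0 ≤ ∑ i : Fin (K-1), 1 / (((i : ℕ):ℝ) + 1) ^ p :=
          Finset.sum_nonneg fun i _ => by positivity
        exact mul_le_mul_of_nonneg_left (pow_le_pow_left₀ hgnn hgB d) (by positivity)
    _ ≤ C ^ 2 * ((lam / (K : ℝ) ^ 2)⁻¹) ^ 2 := by
        rw [hRHS]
        have h1 : (K:ℝ) ^ 4 / (16 * c ^ 2 * lam ^ 2 * (d:ℝ) ^ 2) * B ^ d
            = (B ^ d / (16 * c ^ 2 * (d:ℝ) ^ 2)) * ((K:ℝ) ^ 4 / lam ^ 2) := by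
          field_simp
        rw [h1]
        exact mul_le_mul_of_nonneg_right hC2 (by positivity)
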